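/- For R > 0, let N be a standard Gaussian random variable and define T_R = E[(N - max(-R, min(N, R)))^2]. Then T_R ≤ sqrt(2/π) · (1/R) · exp(-R²/2). -/
import Mathlib

open MeasureTheory ProbabilityTheory Real Set

lemma aux_sq_exp (t : ℝ) : t ^ 2 * Real.exp (-t ^ 2 / 2) ≤ 2 / Real.exp 1 := by
  have h1 : Real.exp 1 * (t ^ 2 / 2) ≤ Real.exp (t ^ 2 / 2) := by
    have h := Real.add_one_le_exp (t ^ 2 / 2 - 1)
    have h2 : Real.exp 1 * Real.exp (t ^ 2 / 2 - 1) = Real.exp (t ^ 2 / 2) := by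
      rw [← Real.exp_add]; congr 1; ring
    nlinarith [Real.exp_pos 1]
  have heq : t ^ 2 * Real.exp (-t ^ 2 / 2) = t ^ 2 / Real.exp (t ^ 2 / 2) := by
    rw [neg_div, Real.exp_neg]; ring
  rw [heq, div_le_div_iff₀ (Real.exp_pos _) (Real.exp_pos _)]
  nlinarith

lemma aux_bound (b a : ℝ) :
    (a - b) ^ 2 * Real.exp (-a ^ 2 / 2) ≤ 2 / Real.exp 1 * Real.exp (b ^ 2 / 2 - b * a) := by
  have h := aux_sq_exp (a - b)
  have key : Real.exp (-a ^ 2 / 2)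
      = Real.exp (-(a - b) ^ 2 / 2) * Real.exp (b ^ 2 / 2 - b * a) := by
    rw [← Real.exp_add]; congr 1; ring
  calc (a - b) ^ 2 * Real.exp (-a ^ 2 / 2)
      = (a - b) ^ 2 * Real.exp (-(a - b) ^ 2 / 2) * Real.exp (b ^ 2 / 2 - b * a) := by
        rw [key, mul_assoc]
    _ ≤ 2 / Real.exp 1 * Real.exp (b ^ 2 / 2 - b * a) :=
        mul_le_mul_of_nonneg_right h (Real.exp_pos _).le

/-- For `R > 0`, if `N` is a standard Gaussian random variable, then the expected squared
truncation error `T_R = E[(N - max (-R) (min N R))^2]` satisfies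
`T_R ≤ √(2/π) · (1/R) · exp(-R²/2)`. -/
theorem stmt_0 (R : ℝ) (hR : 0 < R) :
    ∫ x, (x - max (-R) (min x R)) ^ 2 ∂(gaussianReal 0 1)
      ≤ Real.sqrt (2 / π) * (1 / R) * Real.exp (-R ^ 2 / 2) := by
  have hπ : 0 < π := Real.pi_pos
  set C : ℝ := 2 / Real.exp 1 * (Real.sqrt (2 * π))⁻¹ * Real.exp (R ^ 2 / 2) with hCdef
  have hC0 : 0 ≤ C := by positivity
  set g1 : ℝ → ℝ := (Ioi R).indicator (fun t => C * Real.exp (-R * t)) with hg1def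
  set g : ℝ → ℝ := fun x => g1 x + g1 (-x) with hgdef
  -- pdf formula
  have hpdf : ∀ x : ℝ, gaussianPDFReal 0 1 x
      = (Real.sqrt (2 * π))⁻¹ * Real.exp (-x ^ 2 / 2) := by
    intro x
    simp only [gaussianPDFReal, NNReal.coe_one, mul_one, sub_zero]
  -- step 1: rewrite against Lebesgue
  have hmeas : Measurable fun x => (gaussianPDFReal 0 1 x).toNNReal :=
    (measurable_gaussianPDFReal 0 1).real_toNNReal
  have hrw : ∫ x, (x - max (-R) (min x R)) ^ 2 ∂(gaussianReal 0 1)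
      = ∫ x, gaussianPDFReal 0 1 x * (x - max (-R) (min x R)) ^ 2 := by
    rw [gaussianReal_of_var_ne_zero 0 one_ne_zero]
    rw [show (gaussianPDF 0 1) = fun x => ((gaussianPDFReal 0 1 x).toNNReal : ENNReal) from rfl]
    rw [integral_withDensity_eq_integral_smul hmeas]
    congr 1; ext x
    rw [NNReal.smul_def, smul_eq_mul, Real.coe_toNNReal _ (gaussianPDFReal_nonneg 0 1 x)]
  -- integrability of g1
  have hg1int : Integrable g1 := by
    rw [hg1def, integrable_indicator_iff measurableSet_Ioi]
    exact (exp_neg_integrableOn_Ioi R hR).const_mul C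
  have hgint : Integrable g := hg1int.add hg1int.comp_neg
  -- pointwise bound
  have hptwise : ∀ x : ℝ,
      gaussianPDFReal 0 1 x * (x - max (-R) (min x R)) ^ 2 ≤ g x := by
    intro x
    rw [hpdf]
    have hg1nonneg : ∀ y : ℝ, 0 ≤ g1 y := by
      intro y
      rw [hg1def]
      apply Set.indicator_nonneg
      intro t _
      positivity
    rcases lt_trichotomy x (-R) with hx | hx | hx
    · -- x < -R : truncation is -R
      have hmin : min x R = x := min_eq_left (by linarith)
      have hmax : max (-R) x = -R := max_eq_left (by linarith)
      rw [hmin, hmax]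
      have hx2 : -x ∈ Ioi R := by simp; linarith
      have hg1x : g1 x = 0 := by
        rw [hg1def, Set.indicator_of_notMem (by simp; linarith)]
      show _ ≤ g1 x + g1 (-x)
      rw [hg1x, zero_add, hg1def, Set.indicator_of_mem hx2]
      have := aux_bound (-R) x
      calc (Real.sqrt (2 * π))⁻¹ * Real.exp (-x ^ 2 / 2) * (x - -R) ^ 2
          = (Real.sqrt (2 * π))⁻¹ * ((x - -R) ^ 2 * Real.exp (-x ^ 2 / 2)) := by ring
        _ ≤ (Real.sqrt (2 * π))⁻¹ *
              (2 / Real.exp 1 * Real.exp ((-R) ^ 2 / 2 - -R * x)) := by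
            apply mul_le_mul_of_nonneg_left this (by positivity)
        _ = C * Real.exp (-R * -x) := by
            rw [show (-R) ^ 2 / 2 - -R * x = R ^ 2 / 2 + -R * -x by ring, Real.exp_add, hCdef]
            ring
    · -- x = -R
      subst hx
      have hmin : min (-R) R = -R := min_eq_left (by linarith)
      rw [hmin, max_self, sub_self]
      have hz : ((0:ℝ)) ^ 2 = 0 := by norm_num
      rw [hz, mul_zero]
      exact add_nonneg (hg1nonneg _) (hg1nonneg _)
    · rcases le_or_gt x R with hxR | hxR
      · -- -R < x ≤ R : truncation is x
        have hmin : min x R = x := min_eq_left hxR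
        have hmax : max (-R) x = x := max_eq_right (by linarith)
        rw [hmin, hmax, sub_self]
        have hz : ((0:ℝ)) ^ 2 = 0 := by norm_num
        rw [hz, mul_zero]
        exact add_nonneg (hg1nonneg _) (hg1nonneg _)
      · -- x > R
        have hmin : min x R = R := min_eq_right hxR.le
        have hmax : max (-R) R = R := max_eq_right (by linarith)
        rw [hmin, hmax]
        have hg1negx : g1 (-x) = 0 := by
          rw [hg1def, Set.indicator_of_notMem (by simp; linarith)]
        show _ ≤ g1 x + g1 (-x)
        rw [hg1negx, add_zero, hg1def,
          Set.indicator_of_mem (show x ∈ Ioi R from hxR)]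
        have := aux_bound R x
        calc (Real.sqrt (2 * π))⁻¹ * Real.exp (-x ^ 2 / 2) * (x - R) ^ 2
            = (Real.sqrt (2 * π))⁻¹ * ((x - R) ^ 2 * Real.exp (-x ^ 2 / 2)) := by ring
          _ ≤ (Real.sqrt (2 * π))⁻¹ *
                (2 / Real.exp 1 * Real.exp (R ^ 2 / 2 - R * x)) := by
              apply mul_le_mul_of_nonneg_left this (by positivity)
          _ = C * Real.exp (-R * x) := by
              rw [show R ^ 2 / 2 - R * x = R ^ 2 / 2 + -R * x by ring, Real.exp_add, hCdef]
              ring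
  -- monotonicity
  have hmono : ∫ x, gaussianPDFReal 0 1 x * (x - max (-R) (min x R)) ^ 2 ≤ ∫ x, g x := by
    refine integral_mono_of_nonneg ?_ hgint ?_
    · filter_upwards with x
      have := gaussianPDFReal_nonneg 0 1 x
      positivity
    · filter_upwards with x using hptwise x
  -- compute ∫ g
  have hint1 : ∫ x, g1 x = C * (Real.exp (-(R * R)) / R) := by
    rw [hg1def, integral_indicator measurableSet_Ioi]
    rw [MeasureTheory.integral_const_mul]
    have : ∫ x in Ioi R, Real.exp (-R * x) = R⁻¹ * Real.exp (-(R * R)) := by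
      have h := integral_comp_mul_left_Ioi (fun t => Real.exp (-t)) R hR
      simp only [smul_eq_mul] at h
      have h2 : ∀ x : ℝ, Real.exp (-(R * x)) = Real.exp (-R * x) := by intro x; ring_nf
      rw [integral_exp_neg_Ioi] at h
      calc ∫ x in Ioi R, Real.exp (-R * x)
          = ∫ x in Ioi R, Real.exp (-(R * x)) := by
            apply setIntegral_congr_fun measurableSet_Ioi
            intro x _
            simp [neg_mul]
        _ = R⁻¹ * Real.exp (-(R * R)) := h
    rw [this]
    ring
  have hintg : ∫ x, g x = 2 * C * (Real.exp (-(R * R)) / R) := by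
    rw [hgdef]
    have hcomp : ∫ x : ℝ, g1 (-x) = ∫ x : ℝ, g1 x := integral_neg_eq_self g1 _
    rw [integral_add hg1int hg1int.comp_neg, hcomp, hint1]
    ring
  -- final comparison
  rw [hrw]
  refine hmono.trans ?_
  rw [hintg]
  have hid : 2 * (Real.sqrt (2 * π))⁻¹ = Real.sqrt (2 / π) := by
    rw [Real.sqrt_mul (by norm_num : (0:ℝ) ≤ 2), Real.sqrt_div (by norm_num : (0:ℝ) ≤ 2)]
    have h2 : Real.sqrt 2 * Real.sqrt 2 = 2 := Real.mul_self_sqrt (by norm_num)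
    have hπ' : 0 < Real.sqrt π := Real.sqrt_pos.mpr hπ
    field_simp
    nlinarith [h2, hπ'.le]
  have hexp : Real.exp (R ^ 2 / 2) * Real.exp (-(R * R)) = Real.exp (-R ^ 2 / 2) := by
    rw [← Real.exp_add]; congr 1; ring
  have he : (2:ℝ) / Real.exp 1 ≤ 1 := by
    rw [div_le_one (Real.exp_pos 1)]
    have := Real.add_one_le_exp 1
    linarith
  calc 2 * C * (Real.exp (-(R * R)) / R)
      = 2 / Real.exp 1 * (Real.sqrt (2 / π) * (1 / R) * Real.exp (-R ^ 2 / 2)) := by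
        rw [hCdef, ← hid, ← hexp]; ring
    _ ≤ 1 * (Real.sqrt (2 / π) * (1 / R) * Real.exp (-R ^ 2 / 2)) := by
        apply mul_le_mul_of_nonneg_right he
        positivity
    _ = Real.sqrt (2 / π) * (1 / R) * Real.exp (-R ^ 2 / 2) := one_mul _
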